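/- If ν is uniformly transverse on Ω with constant κ, i.e., ∫_{π[x,y]} sin α(x−y,H) dν(H) ≥ κ ν(π[x,y]) for all x,y ∈ Ω, then f_ν is bi-Lipschitz from (Ω, d_ν) to ℝⁿ: κ d_ν(x,y) ≤ |f_ν(x) − f_ν(y)| ≤ d_ν(x,y) for all x,y ∈ Ω. -/

import Mathlib

open MeasureTheory Set

noncomputable section

/-- Euclidean space `ℝⁿ`. -/
abbrev Euc (n : ℕ) := EuclideanSpace ℝ (Fin n)

/-- The space of affine hyperplanes in `ℝⁿ`, encoded as pairs `(v, c)` with `‖v‖ = 1`,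
representing the hyperplane `{x : ⟪x, v⟫ = c}`. -/
abbrev Hyp (n : ℕ) := {p : Euc n × ℝ // ‖p.1‖ = 1}

/-- The hyperplane determined by `H`, as a subset of `ℝⁿ`. -/
def hset {n : ℕ} (H : Hyp n) : Set (Euc n) := {x | (inner ℝ x H.1.1 : ℝ) = H.1.2}

/-- `meets A = π A`: the set of hyperplanes intersecting `A`. -/
def meets {n : ℕ} (A : Set (Euc n)) : Set (Hyp n) := {H | (hset H ∩ A).Nonempty}

/-- The unit normal of `H` pointing out of the halfspace containing the basepoint `o`. -/
def nrm {n : ℕ} (o : Euc n) (H : Hyp n) : Euc n :=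
  if (inner ℝ o H.1.1 : ℝ) < H.1.2 then H.1.1 else -H.1.1

/-- `fnu ν o x = ∫_{π[o,x]} n(H) dν(H)`. -/
def fnu {n : ℕ} (ν : Measure (Hyp n)) (o : Euc n) (x : Euc n) : Euc n :=
  ∫ H in meets (segment ℝ o x), nrm o H ∂ν

/-- `sin α(v, H) = |⟪v, n(H)⟫| / |v|`, the sine of the angle between the line of `v`
and the hyperplane `H`. -/
def sinA {n : ℕ} (v : Euc n) (H : Hyp n) : ℝ := |(inner ℝ v H.1.1 : ℝ)| / ‖v‖

instance hypBorel {n : ℕ} : BorelSpace (Hyp n) :=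
  Subtype.borelSpace {p : Euc n × ℝ | ‖p.1‖ = 1}

def gfun {n : ℕ} (p : Euc n) (H : Hyp n) : ℝ := (inner ℝ p H.1.1 : ℝ) - H.1.2

lemma cont_gfun {n : ℕ} (p : Euc n) : Continuous (gfun p) := by
  unfold gfun
  exact (continuous_const.inner (continuous_subtype_val.fst)).sub (continuous_subtype_val.snd)

lemma cpt_seg {n : ℕ} (x y : Euc n) : IsCompact (segment ℝ x y) := by
  rw [segment_eq_image]
  exact isCompact_Icc.image (by continuity)



lemma meets_singleton {n : ℕ} (p : Euc n) : meets {p} = {H : Hyp n | gfun p H = 0} := by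
  ext H
  simp only [meets, hset, gfun, mem_setOf_eq, inter_nonempty_iff_exists_right]
  constructor
  · rintro ⟨z, hz, h⟩
    simp only [mem_singleton_iff] at hz
    subst hz; linarith
  · intro h
    exact ⟨p, rfl, by linarith⟩

lemma gfun_combo {n : ℕ} (x y : Euc n) (H : Hyp n) (a b : ℝ) (hab : a + b = 1) :
    gfun (a • x + b • y) H = a * gfun x H + b * gfun y H := by
  simp only [gfun, inner_add_left, real_inner_smul_left]
  have : H.1.2 = (a + b) * H.1.2 := by rw [hab, one_mul]
  nlinarith [this]

lemma mem_hset_of_gfun {n : ℕ} {z : Euc n} {H : Hyp n} (h : gfun z H = 0) : z ∈ hset H := by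
  simp only [hset, mem_setOf_eq]; unfold gfun at h; linarith

lemma seg_half {n : ℕ} (x y : Euc n) (H : Hyp n) (hx : gfun x H ≤ 0) (hy : 0 ≤ gfun y H) :
    H ∈ meets (segment ℝ x y) := by
  by_cases he : gfun x H = gfun y H
  · have hx0 : gfun x H = 0 := le_antisymm hx (he ▸ hy)
    exact ⟨x, mem_hset_of_gfun hx0, left_mem_segment ℝ x y⟩
  · set d : ℝ := gfun x H - gfun y H with hd
    have hdneg : d < 0 := by
      rcases lt_or_eq_of_le (sub_nonpos.2 (hx.trans hy)) with h | h
      · exact h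
      · exact absurd (sub_eq_zero.1 h) he
    set t : ℝ := gfun x H / d with ht
    have ht0 : 0 ≤ t := by
      rw [ht, div_nonneg_iff]; right; exact ⟨hx, hdneg.le⟩
    have ht1 : t ≤ 1 := by
      rw [ht, div_le_one_iff]
      right; right; exact ⟨hdneg, by rw [hd]; linarith⟩
    have htd : t * d = gfun x H := div_mul_cancel₀ _ hdneg.ne
    have hzseg : (1 - t) • x + t • y ∈ segment ℝ x y := by
      refine ⟨1 - t, t, by linarith, ht0, by ring, rfl⟩
    refine ⟨(1 - t) • x + t • y, mem_hset_of_gfun ?_, hzseg⟩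
    rw [gfun_combo x y H (1 - t) t (by ring)]
    rw [hd] at htd
    linear_combination -htd

lemma meets_segment {n : ℕ} (x y : Euc n) :
    meets (segment ℝ x y) = {H : Hyp n | gfun x H * gfun y H ≤ 0} := by
  ext H
  simp only [mem_setOf_eq]
  constructor
  · rintro ⟨z, hz, a, b, ha, hb, hab, rfl⟩
    simp only [hset, mem_setOf_eq] at hz
    have h0 : a * gfun x H + b * gfun y H = 0 := by
      rw [← gfun_combo x y H a b hab]; simp [gfun, sub_eq_zero, hz]
    have h1 : a * gfun x H ^ 2 + b * (gfun x H * gfun y H) = 0 := by linear_combination gfun x H * h0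
    have h2 : a * (gfun x H * gfun y H) + b * gfun y H ^ 2 = 0 := by linear_combination gfun y H * h0
    nlinarith [mul_nonneg ha (sq_nonneg (gfun x H)), mul_nonneg hb (sq_nonneg (gfun y H))]
  · intro h
    rcases mul_nonpos_iff.1 h with ⟨h1, h2⟩ | ⟨h1, h2⟩
    · rw [segment_symm]; exact seg_half y x H h2 h1
    · exact seg_half x y H h1 h2


lemma norm_nrm {n : ℕ} (o : Euc n) (H : Hyp n) : ‖nrm o H‖ = 1 := by
  unfold nrm; split <;> simp [H.2]

lemma meas_nrm {n : ℕ} (o : Euc n) : Measurable (nrm o) := by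
  unfold nrm
  refine Measurable.ite ?_ ?_ ?_
  · exact measurableSet_lt (continuous_const.inner (continuous_subtype_val.fst)).measurable
      (continuous_subtype_val.snd).measurable
  · exact (continuous_subtype_val.fst).measurable
  · exact (continuous_subtype_val.fst).neg.measurable

lemma meas_meets_seg {n : ℕ} (x y : Euc n) : MeasurableSet (meets (segment ℝ x y)) := by
  rw [meets_segment]
  exact measurableSet_le ((cont_gfun x).mul (cont_gfun y)).measurable measurable_const

lemma int_nrm {n : ℕ} (ν : Measure (Hyp n)) (o : Euc n) {S : Set (Hyp n)}
    (hS : MeasurableSet S) (hfin : ν S < ⊤) : IntegrableOn (nrm o) S ν := by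
  haveI : IsFiniteMeasure (ν.restrict S) := ⟨by rwa [Measure.restrict_apply_univ]⟩
  exact (integrable_const (1 : ℝ)).mono' (meas_nrm o).aestronglyMeasurable
    (ae_of_all _ fun H => by rw [norm_nrm])

lemma inner_sub_gfun {n : ℕ} (x y : Euc n) (H : Hyp n) :
    (inner ℝ (x - y) H.1.1 : ℝ) = gfun x H - gfun y H := by
  simp [gfun, inner_sub_left]

lemma nrm_pos {n : ℕ} {o : Euc n} {H : Hyp n} (h : gfun o H < 0) : nrm o H = H.1.1 := by
  unfold nrm; rw [if_pos]; unfold gfun at h; linarith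

lemma nrm_neg {n : ℕ} {o : Euc n} {H : Hyp n} (h : 0 < gfun o H) : nrm o H = -H.1.1 := by
  unfold nrm; rw [if_neg]; unfold gfun at h; intro hc; linarith

section main
variable {n : ℕ} (o x y : Euc n) (H : Hyp n)

-- the sign of gfun o H * gfun x H decides membership of H in meets (segment o x)
lemma memA_iff : H ∈ meets (segment ℝ o x) ↔ gfun o H * gfun x H ≤ 0 := by
  rw [meets_segment]; rfl

lemma key2 (ho0 : gfun o H ≠ 0) (hx0 : gfun x H ≠ 0) (hy0 : gfun y H ≠ 0) :
    (inner ℝ (x - y) ((meets (segment ℝ o x)).indicator (nrm o) H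
      - (meets (segment ℝ o y)).indicator (nrm o) H) : ℝ)
    = (meets (segment ℝ x y)).indicator (fun K => |(inner ℝ (x - y) K.1.1 : ℝ)|) H := by
  set a := gfun o H with ha
  set b := gfun x H with hb
  set c := gfun y H with hc
  by_cases hA : H ∈ meets (segment ℝ o x) <;> by_cases hB : H ∈ meets (segment ℝ o y)
  · have hab : a * b < 0 := ((memA_iff o x H).1 hA).lt_of_ne (mul_ne_zero ho0 hx0)
    have hac : a * c < 0 := ((memA_iff o y H).1 hB).lt_of_ne (mul_ne_zero ho0 hy0)
    have hC : H ∉ meets (segment ℝ x y) := by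
      rw [memA_iff x y H]
      intro hcon
      nlinarith [mul_pos_of_neg_of_neg hab hac, mul_self_nonneg a]
    rw [indicator_of_mem hA, indicator_of_mem hB, indicator_of_notMem hC, sub_self,
      inner_zero_right]
  · have hab : a * b < 0 := ((memA_iff o x H).1 hA).lt_of_ne (mul_ne_zero ho0 hx0)
    have hac : 0 < a * c := by
      rcases (not_le.1 (fun h => hB ((memA_iff o y H).2 h)) : 0 < a * c) with h
      exact h
    have hC : H ∈ meets (segment ℝ x y) := by
      rw [memA_iff x y H]; nlinarith [mul_self_nonneg a]
    rw [indicator_of_mem hA, indicator_of_notMem hB, indicator_of_mem hC, sub_zero,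
      inner_sub_gfun]
    rcases lt_or_gt_of_ne ho0 with h | h
    · rw [nrm_pos h, inner_sub_gfun, abs_of_pos (by nlinarith)]
    · rw [nrm_neg h, inner_neg_right, inner_sub_gfun, abs_of_neg (by nlinarith)]
  · have hab : 0 < a * b := by
      exact not_le.1 (fun h => hA ((memA_iff o x H).2 h))
    have hac : a * c < 0 := ((memA_iff o y H).1 hB).lt_of_ne (mul_ne_zero ho0 hy0)
    have hC : H ∈ meets (segment ℝ x y) := by
      rw [memA_iff x y H]; nlinarith [mul_self_nonneg a]
    rw [indicator_of_notMem hA, indicator_of_mem hB, indicator_of_mem hC, zero_sub,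
      inner_neg_right, inner_sub_gfun]
    rcases lt_or_gt_of_ne ho0 with h | h
    · rw [nrm_pos h, inner_sub_gfun, abs_of_neg (by nlinarith)]
    · rw [nrm_neg h, inner_neg_right, inner_sub_gfun, abs_of_pos (by nlinarith)]; ring
  · have hab : 0 < a * b := not_le.1 (fun h => hA ((memA_iff o x H).2 h))
    have hac : 0 < a * c := not_le.1 (fun h => hB ((memA_iff o y H).2 h))
    have hC : H ∉ meets (segment ℝ x y) := by
      rw [memA_iff x y H]
      intro hcon
      nlinarith [mul_pos hab hac, mul_self_nonneg a]
    rw [indicator_of_notMem hA, indicator_of_notMem hB, indicator_of_notMem hC, sub_self,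
      inner_zero_right]

lemma key1 (ho0 : gfun o H ≠ 0) (hx0 : gfun x H ≠ 0) (hy0 : gfun y H ≠ 0) :
    ‖(meets (segment ℝ o x)).indicator (nrm o) H
      - (meets (segment ℝ o y)).indicator (nrm o) H‖
    = (meets (segment ℝ x y)).indicator (fun _ => (1 : ℝ)) H := by
  set a := gfun o H with ha
  set b := gfun x H with hb
  set c := gfun y H with hc
  by_cases hA : H ∈ meets (segment ℝ o x) <;> by_cases hB : H ∈ meets (segment ℝ o y)
  · have hab : a * b < 0 := ((memA_iff o x H).1 hA).lt_of_ne (mul_ne_zero ho0 hx0)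
    have hac : a * c < 0 := ((memA_iff o y H).1 hB).lt_of_ne (mul_ne_zero ho0 hy0)
    have hC : H ∉ meets (segment ℝ x y) := by
      rw [memA_iff x y H]
      intro hcon
      nlinarith [mul_pos_of_neg_of_neg hab hac, mul_self_nonneg a]
    rw [indicator_of_mem hA, indicator_of_mem hB, indicator_of_notMem hC, sub_self, norm_zero]
  · have hab : a * b < 0 := ((memA_iff o x H).1 hA).lt_of_ne (mul_ne_zero ho0 hx0)
    have hac : 0 < a * c := not_le.1 (fun h => hB ((memA_iff o y H).2 h))
    have hC : H ∈ meets (segment ℝ x y) := by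
      rw [memA_iff x y H]; nlinarith [mul_self_nonneg a]
    rw [indicator_of_mem hA, indicator_of_notMem hB, indicator_of_mem hC, sub_zero, norm_nrm]
  · have hab : 0 < a * b := not_le.1 (fun h => hA ((memA_iff o x H).2 h))
    have hac : a * c < 0 := ((memA_iff o y H).1 hB).lt_of_ne (mul_ne_zero ho0 hy0)
    have hC : H ∈ meets (segment ℝ x y) := by
      rw [memA_iff x y H]; nlinarith [mul_self_nonneg a]
    rw [indicator_of_notMem hA, indicator_of_mem hB, indicator_of_mem hC, zero_sub, norm_neg,
      norm_nrm]
  · have hab : 0 < a * b := not_le.1 (fun h => hA ((memA_iff o x H).2 h))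
    have hac : 0 < a * c := not_le.1 (fun h => hB ((memA_iff o y H).2 h))
    have hC : H ∉ meets (segment ℝ x y) := by
      rw [memA_iff x y H]
      intro hcon
      nlinarith [mul_pos hab hac, mul_self_nonneg a]
    rw [indicator_of_notMem hA, indicator_of_notMem hB, indicator_of_notMem hC, sub_self,
      norm_zero]

end main

/-- if `ν` is uniformly transverse on `Ω` with constant `κ`, then `f_ν` is
bi-Lipschitz from `(Ω, d_ν)` to `ℝⁿ`: `κ d_ν(x,y) ≤ |f_ν(x) − f_ν(y)| ≤ d_ν(x,y)`. -/
theorem stmt11 (n : ℕ) (hn : 2 ≤ n) (Ω : Set (Euc n)) (hΩo : IsOpen Ω) (hΩne : Ω.Nonempty)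
    (hΩc : Convex ℝ Ω) (ν : Measure (Hyp n))
    (hpt : ∀ p ∈ Ω, ν (meets {p}) = 0)
    (hseg : ∀ x ∈ Ω, ∀ y ∈ Ω, x ≠ y → 0 < ν (meets (segment ℝ x y)))
    (hcpt : ∀ K ⊆ Ω, IsCompact K → ν (meets K) < ⊤)
    (o : Euc n) (ho : o ∈ Ω)
    (κ : ℝ) (hκ : 0 < κ)
    (htrans : ∀ x ∈ Ω, ∀ y ∈ Ω,
      κ * (ν (meets (segment ℝ x y))).toReal ≤
        ∫ H in meets (segment ℝ x y), sinA (x - y) H ∂ν) :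
    ∀ x ∈ Ω, ∀ y ∈ Ω,
      κ * (ν (meets (segment ℝ x y))).toReal ≤ ‖fnu ν o x - fnu ν o y‖ ∧
      ‖fnu ν o x - fnu ν o y‖ ≤ (ν (meets (segment ℝ x y))).toReal := by
  intro x hx y hy
  by_cases hxy : x = y
  · subst hxy
    have hC : ν (meets (segment ℝ x x)) = 0 := by rw [segment_same]; exact hpt x hx
    rw [hC, sub_self, norm_zero]
    simp
  -- setup
  have hAm : MeasurableSet (meets (segment ℝ o x)) := meas_meets_seg o x
  have hBm : MeasurableSet (meets (segment ℝ o y)) := meas_meets_seg o y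
  have hCm : MeasurableSet (meets (segment ℝ x y)) := meas_meets_seg x y
  have hAfin : ν (meets (segment ℝ o x)) < ⊤ :=
    hcpt _ (hΩc.segment_subset ho hx) (cpt_seg o x)
  have hBfin : ν (meets (segment ℝ o y)) < ⊤ :=
    hcpt _ (hΩc.segment_subset ho hy) (cpt_seg o y)
  have hCfin : ν (meets (segment ℝ x y)) < ⊤ :=
    hcpt _ (hΩc.segment_subset hx hy) (cpt_seg x y)
  have hiA : Integrable ((meets (segment ℝ o x)).indicator (nrm o)) ν :=
    (int_nrm ν o hAm hAfin).integrable_indicator hAm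
  have hiB : Integrable ((meets (segment ℝ o y)).indicator (nrm o)) ν :=
    (int_nrm ν o hBm hBfin).integrable_indicator hBm
  set G : Hyp n → Euc n := fun H =>
    (meets (segment ℝ o x)).indicator (nrm o) H - (meets (segment ℝ o y)).indicator (nrm o) H
    with hGdef
  have hGint : Integrable G ν := hiA.sub hiB
  have hsub : fnu ν o x - fnu ν o y = ∫ H, G H ∂ν := by
    rw [fnu, fnu, ← integral_indicator hAm, ← integral_indicator hBm,
      ← integral_sub hiA hiB]
  -- ae nonvanishing
  have hae : ∀ᵐ H ∂ν, gfun o H ≠ 0 ∧ gfun x H ≠ 0 ∧ gfun y H ≠ 0 := by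
    have h1 : ∀ᵐ H ∂ν, gfun o H ≠ 0 := by
      rw [ae_iff]
      have := hpt o ho
      rw [meets_singleton] at this
      simpa using this
    have h2 : ∀ᵐ H ∂ν, gfun x H ≠ 0 := by
      rw [ae_iff]
      have := hpt x hx
      rw [meets_singleton] at this
      simpa using this
    have h3 : ∀ᵐ H ∂ν, gfun y H ≠ 0 := by
      rw [ae_iff]
      have := hpt y hy
      rw [meets_singleton] at this
      simpa using this
    exact h1.and (h2.and h3)
  -- upper bound
  have hnormae : ∀ᵐ H ∂ν, ‖G H‖ = (meets (segment ℝ x y)).indicator (fun _ => (1 : ℝ)) H := by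
    filter_upwards [hae] with H hH
    exact key1 o x y H hH.1 hH.2.1 hH.2.2
  have hupper : ‖fnu ν o x - fnu ν o y‖ ≤ (ν (meets (segment ℝ x y))).toReal := by
    rw [hsub]
    calc ‖∫ H, G H ∂ν‖ ≤ ∫ H, ‖G H‖ ∂ν := norm_integral_le_integral_norm _
    _ = ∫ H, (meets (segment ℝ x y)).indicator (fun _ => (1 : ℝ)) H ∂ν :=
        integral_congr_ae hnormae
    _ = (ν (meets (segment ℝ x y))).toReal := by
        rw [integral_indicator_const (1 : ℝ) hCm]; simp [Measure.real]
  refine ⟨?_, hupper⟩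
  -- lower bound
  have hinnerae : ∀ᵐ H ∂ν, (inner ℝ (x - y) (G H) : ℝ)
      = (meets (segment ℝ x y)).indicator (fun K => |(inner ℝ (x - y) K.1.1 : ℝ)|) H := by
    filter_upwards [hae] with H hH
    exact key2 o x y H hH.1 hH.2.1 hH.2.2
  have hxyn : (0 : ℝ) < ‖x - y‖ := by
    rw [norm_pos_iff]; exact sub_ne_zero.2 hxy
  have hinner : (inner ℝ (x - y) (∫ H, G H ∂ν) : ℝ)
      = ‖x - y‖ * ∫ H in meets (segment ℝ x y), sinA (x - y) H ∂ν := by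
    rw [← integral_inner hGint]
    rw [integral_congr_ae hinnerae, integral_indicator hCm]
    rw [← integral_const_mul]
    refine setIntegral_congr_fun hCm fun H _ => ?_
    rw [sinA]
    field_simp
  have hCS : (inner ℝ (x - y) (∫ H, G H ∂ν) : ℝ) ≤ ‖x - y‖ * ‖∫ H, G H ∂ν‖ :=
    real_inner_le_norm _ _
  have htr := htrans x hx y hy
  have : ‖x - y‖ * (κ * (ν (meets (segment ℝ x y))).toReal) ≤ ‖x - y‖ * ‖∫ H, G H ∂ν‖ := by
    calc ‖x - y‖ * (κ * (ν (meets (segment ℝ x y))).toReal)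
        ≤ ‖x - y‖ * ∫ H in meets (segment ℝ x y), sinA (x - y) H ∂ν :=
          mul_le_mul_of_nonneg_left htr hxyn.le
    _ = (inner ℝ (x - y) (∫ H, G H ∂ν) : ℝ) := hinner.symm
    _ ≤ ‖x - y‖ * ‖∫ H, G H ∂ν‖ := hCS
  rw [hsub]
  exact le_of_mul_le_mul_left this hxyn
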